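/- The map γ ↦ γ + ψ(γ) is strictly increasing on Γ_log ∖ {0}: for all nonzero α, β ∈ Γ_log with α < β, one has α + ψ(α) < β + ψ(β). -/

import Mathlib

noncomputable section

/-- Γ_log : the additive group of finitely supported functions ℕ → ℝ,
linearly ordered lexicographically. -/
abbrev GammaLog : Type := Lex (ℕ →₀ ℝ)

/-- χ_[0,n] : the characteristic function of {0,…,n}. -/
def chiI (n : ℕ) : GammaLog :=
  toLex (Finsupp.indicator (Finset.range (n + 1)) fun _ _ => (1 : ℝ))

/-- For nonzero α, ψ(α) = χ_[0,n] where n is the least index with α(n) ≠ 0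
(junk value when α = 0). -/
def psiL (α : GammaLog) : GammaLog := chiI (sInf {n : ℕ | ofLex α n ≠ 0})

lemma ofLex_chiI (n j : ℕ) : ofLex (chiI n) j = if j ≤ n then (1 : ℝ) else 0 := by
  simp [chiI, Finsupp.indicator_apply, Nat.lt_succ_iff]

lemma sInf_mem_of_ne {α : GammaLog} (hα : α ≠ 0) :
    ofLex α (sInf {n : ℕ | ofLex α n ≠ 0}) ≠ 0 := by
  have hne : {n : ℕ | ofLex α n ≠ 0}.Nonempty := by
    by_contra hne
    rw [Set.not_nonempty_iff_eq_empty, Set.eq_empty_iff_forall_notMem] at hne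
    apply hα
    have : ofLex α = 0 := by ext j; simpa using hne j
    exact this
  exact Nat.sInf_mem hne

/-- γ ↦ γ + ψ(γ) is strictly increasing on Γ_log ∖ {0}. -/
theorem add_psiL_strictMono (α β : GammaLog) (hα : α ≠ 0) (hβ : β ≠ 0)
    (h : α < β) :
    α + psiL α < β + psiL β := by
  obtain ⟨n, hn, hlt⟩ := Finsupp.Lex.lt_iff.mp h
  set a := sInf {n : ℕ | ofLex α n ≠ 0} with ha
  set b := sInf {n : ℕ | ofLex β n ≠ 0} with hb
  have haumem : ofLex α a ≠ 0 := sInf_mem_of_ne hα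
  have hbmem : ofLex β b ≠ 0 := sInf_mem_of_ne hβ
  have hazero : ∀ k < a, ofLex α k = 0 := fun k hk => by
    by_contra hk'; exact absurd (Nat.sInf_le hk') (Nat.not_le.mpr hk)
  have hbzero : ∀ k < b, ofLex β k = 0 := fun k hk => by
    by_contra hk'; exact absurd (Nat.sInf_le hk') (Nat.not_le.mpr hk)
  have hadd : ∀ (x y : GammaLog) (j : ℕ), ofLex (x + y) j = ofLex x j + ofLex y j :=
    fun _ _ _ => rfl
  rcases lt_trichotomy a b with hab | hab | hab
  · -- a < b, show n = a
    have hna : n = a := by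
      rcases lt_trichotomy n a with h1 | h1 | h1
      · exfalso
        have : ofLex β n ≠ 0 := by
          have := hazero n h1; linarith
        exact absurd (Nat.sInf_le this) (Nat.not_le.mpr (h1.trans hab))
      · exact h1
      · exfalso
        have : ofLex β a ≠ 0 := by rw [← hn a h1]; exact haumem
        exact absurd (Nat.sInf_le this) (Nat.not_le.mpr hab)
    have hba : ofLex β a = 0 := hbzero a hab
    have haneg : ofLex α a < 0 := by rw [hna] at hlt; linarith
    rw [Finsupp.Lex.lt_iff]
    refine ⟨a, fun j hj => ?_, ?_⟩
    · rw [hadd, hadd, hn j (hna ▸ hj)]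
      simp only [psiL]
      rw [← ha, ← hb, ofLex_chiI, ofLex_chiI,
        if_pos hj.le, if_pos (hj.le.trans hab.le)]
    · rw [hadd, hadd]
      simp only [psiL]
      rw [← ha, ← hb, ofLex_chiI, ofLex_chiI, if_pos le_rfl,
        if_pos hab.le, hba]
      linarith
  · -- a = b
    have : psiL α = psiL β := by simp only [psiL]; rw [← ha, ← hb, hab]
    rw [this]
    exact add_lt_add_left h _
  · -- b < a, show n = b
    have hnb : n = b := by
      rcases lt_trichotomy n b with h1 | h1 | h1
      · exfalso
        have : ofLex α n ≠ 0 := by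
          have := hbzero n h1; linarith
        exact absurd (Nat.sInf_le this) (Nat.not_le.mpr (h1.trans hab))
      · exact h1
      · exfalso
        have : ofLex α b ≠ 0 := by rw [hn b h1]; exact hbmem
        exact absurd (Nat.sInf_le this) (Nat.not_le.mpr hab)
    have hab0 : ofLex α b = 0 := hazero b hab
    have hbpos : 0 < ofLex β b := by rw [hnb] at hlt; linarith
    rw [Finsupp.Lex.lt_iff]
    refine ⟨b, fun j hj => ?_, ?_⟩
    · rw [hadd, hadd, hn j (hnb ▸ hj)]
      simp only [psiL]
      rw [← ha, ← hb, ofLex_chiI, ofLex_chiI,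
        if_pos hj.le, if_pos (hj.le.trans hab.le)]
    · rw [hadd, hadd]
      simp only [psiL]
      rw [← ha, ← hb, ofLex_chiI, ofLex_chiI, if_pos le_rfl,
        if_pos hab.le, hab0]
      linarith
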